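/- For nonzero complex numbers α₁, α₂, the Leibniz algebra K₁(α₁,α₂) is isomorphic to K₁(1,1), where K₁(α₁,α₂) has basis {l, p₊, p₋, X₁, X₂, X₃} with nonzero products [l,p₊]=p₊, [p₊,l]=-p₊, [l,p₋]=-p₋, [p₋,l]=p₋, [l,l]=α₁X₁, [p₊,p₋]=α₂X₁, [p₋,p₊]=-α₂X₁, [X₁,p₊]=X₂, [X₁,p₋]=-X₃, [X₂,l]=-X₂, [X₃,l]=X₃. -/
import Mathlib


/-- Standard basis vector of `Fin 6 → ℂ`. -/
noncomputable def e₆ (i : Fin 6) : Fin 6 → ℂ := Pi.single i 1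

/-- The bracket of the algebra `K₁(α₁,α₂)` on `Fin 6 → ℂ`, with basis ordering
`0 = l, 1 = p₊, 2 = p₋, 3 = X₁, 4 = X₂, 5 = X₃` and nonzero products
`[l,p₊]=p₊, [p₊,l]=-p₊, [l,p₋]=-p₋, [p₋,l]=p₋, [l,l]=α₁X₁, [p₊,p₋]=α₂X₁,
[p₋,p₊]=-α₂X₁, [X₁,p₊]=X₂, [X₁,p₋]=-X₃, [X₂,l]=-X₂, [X₃,l]=X₃`. -/
noncomputable def K1 (a₁ a₂ : ℂ) (u v : Fin 6 → ℂ) : Fin 6 → ℂ :=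
  ∑ i : Fin 6, ∑ j : Fin 6, (u i * v j) •
    ![![a₁ • e₆ 3, e₆ 1, -(e₆ 2), 0, 0, 0],
      ![-(e₆ 1), 0, a₂ • e₆ 3, 0, 0, 0],
      ![e₆ 2, -(a₂ • e₆ 3), 0, 0, 0, 0],
      ![0, e₆ 4, -(e₆ 5), 0, 0, 0],
      ![-(e₆ 4), 0, 0, 0, 0, 0],
      ![e₆ 5, 0, 0, 0, 0, 0]] i j

@[simp]
lemma cons_val_five' {α : Type*} {m : ℕ} (x : α) (u : Fin (m+5) → α) :
    Matrix.vecCons x u 5 =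
      Matrix.vecHead (Matrix.vecTail (Matrix.vecTail (Matrix.vecTail (Matrix.vecTail u)))) :=
  rfl

lemma K1_eq (a b : ℂ) (u v : Fin 6 → ℂ) :
    K1 a b u v = ![0, u 0 * v 1 - u 1 * v 0, u 2 * v 0 - u 0 * v 2,
      a * (u 0 * v 0) + b * (u 1 * v 2) - b * (u 2 * v 1),
      u 3 * v 1 - u 4 * v 0, u 5 * v 0 - u 3 * v 2] := by
  funext k
  simp only [K1, Fin.sum_univ_six, Finset.sum_apply, Pi.add_apply, Pi.smul_apply,
    Matrix.cons_val_zero, Matrix.cons_val_one, Matrix.head_cons, Matrix.cons_val_two,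
    Matrix.tail_cons, Matrix.cons_val_three, Matrix.cons_val_four, cons_val_five',
    Matrix.head_fin_const, Matrix.cons_val_fin_one,
    Pi.neg_apply, Pi.zero_apply, smul_eq_mul, e₆]
  fin_cases k <;>
    simp [Pi.single_apply, Matrix.vecHead, Matrix.vecTail] <;> ring

/-- For nonzero `α₁, α₂`, the Leibniz algebra `K₁(α₁,α₂)` is isomorphic to `K₁(1,1)`. -/
theorem stmt_12 (a₁ a₂ : ℂ) (h₁ : a₁ ≠ 0) (h₂ : a₂ ≠ 0) :
    ∃ f : (Fin 6 → ℂ) ≃ₗ[ℂ] (Fin 6 → ℂ),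
      ∀ u v : Fin 6 → ℂ, f (K1 a₁ a₂ u v) = K1 1 1 (f u) (f v) := by
  set c : Fin 6 → ℂ := ![1, a₂ / a₁, 1, 1 / a₁, a₂ / (a₁ * a₁), 1 / a₁] with hc
  have hcne : ∀ i, c i ≠ 0 := by
    intro i
    fin_cases i <;>
      simp [hc, div_ne_zero, h₁, h₂, mul_ne_zero, inv_ne_zero]
  refine ⟨LinearEquiv.piCongrRight fun i => LinearEquiv.smulOfNeZero ℂ ℂ (c i) (hcne i), ?_⟩
  intro u v
  have happ : ∀ (w : Fin 6 → ℂ) (i : Fin 6),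
      (LinearEquiv.piCongrRight fun i => LinearEquiv.smulOfNeZero ℂ ℂ (c i) (hcne i)) w i
        = c i * w i := fun w i => rfl
  funext k
  rw [K1_eq, K1_eq]
  simp only [happ]
  fin_cases k <;>
    simp [hc, Matrix.vecHead, Matrix.vecTail] <;> field_simp <;> ring
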